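/- Consistency characterization: with notation as above, the initial value problem F Y_{k+1} = G Y_k + V_k, Y_0 given, has a solution if and only if Y_0 + Q_q ∑_{i=0}^{q*-1} H^i P₂ V_i lies in the column span of Q_p. -/

import Mathlib

theorem stmt15 {p q qs : ℕ}
    (F G P Q : Matrix (Fin (p + q)) (Fin (p + q)) ℝ)
    (hP : IsUnit P) (hQ : IsUnit Q)
    (J : Matrix (Fin p) (Fin p) ℝ) (H : Matrix (Fin q) (Fin q) ℝ)
    (hH : H ^ qs = 0)
    (hF : P * F * Q = (Matrix.fromBlocks 1 0 0 H).submatrix finSumFinEquiv.symm finSumFinEquiv.symm)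
    (hG : P * G * Q = (Matrix.fromBlocks J 0 0 1).submatrix finSumFinEquiv.symm finSumFinEquiv.symm)
    (Qp : Matrix (Fin (p + q)) (Fin p) ℝ) (hQp : Qp = Q.submatrix id (Fin.castAdd q))
    (Qq : Matrix (Fin (p + q)) (Fin q) ℝ) (hQq : Qq = Q.submatrix id (Fin.natAdd p))
    (P₁ : Matrix (Fin p) (Fin (p + q)) ℝ) (hP₁ : P₁ = P.submatrix (Fin.castAdd q) id)
    (P₂ : Matrix (Fin q) (Fin (p + q)) ℝ) (hP₂ : P₂ = P.submatrix (Fin.natAdd p) id)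
    (V : ℕ → Fin (p + q) → ℝ) (Y₀ : Fin (p + q) → ℝ) :
    (∃ Y : ℕ → Fin (p + q) → ℝ, Y 0 = Y₀ ∧
      ∀ k, F.mulVec (Y (k + 1)) = G.mulVec (Y k) + V k) ↔
    (∃ x : Fin p → ℝ,
      Y₀ + Qq.mulVec (∑ i ∈ Finset.range qs, (H ^ i).mulVec (P₂.mulVec (V i))) =
        Qp.mulVec x) := by
  have e := (finSumFinEquiv : Fin p ⊕ Fin q ≃ Fin (p + q))
  have hPd : IsUnit P.det := (Matrix.isUnit_iff_isUnit_det P).mp hP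
  have hQd : IsUnit Q.det := (Matrix.isUnit_iff_isUnit_det Q).mp hQ
  have hPP : P⁻¹ * P = 1 := Matrix.nonsing_inv_mul P hPd
  have hQQ : Q * Q⁻¹ = 1 := Matrix.mul_nonsing_inv Q hQd
  have hQQ' : Q⁻¹ * Q = 1 := Matrix.nonsing_inv_mul Q hQd
  -- split lemma for Q
  have hsplit : ∀ u : Fin (p + q) → ℝ,
      Q.mulVec u = Qp.mulVec (fun i => u (Fin.castAdd q i)) +
        Qq.mulVec (fun i => u (Fin.natAdd p i)) := by
    intro u; funext j
    have := Fin.sum_univ_add (fun k : Fin (p + q) => Q j k * u k)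
    simpa [Matrix.mulVec, dotProduct, hQp, hQq] using this
  -- P block components
  have hP1c : ∀ (r : Fin (p + q) → ℝ) (i : Fin p),
      P.mulVec r (Fin.castAdd q i) = P₁.mulVec r i := by
    intro r i; simp [Matrix.mulVec, dotProduct, hP₁]
  have hP2c : ∀ (r : Fin (p + q) → ℝ) (i : Fin q),
      P.mulVec r (Fin.natAdd p i) = P₂.mulVec r i := by
    intro r i; simp [Matrix.mulVec, dotProduct, hP₂]
  -- P mulVec injectivity
  have hPinj : ∀ a b : Fin (p + q) → ℝ, P.mulVec a = P.mulVec b → a = b := by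
    intro a b hab
    have := congrArg (Matrix.mulVec P⁻¹) hab
    simpa [Matrix.mulVec_mulVec, hPP, Matrix.one_mulVec] using this
  have hcompL : ∀ u : Fin (p + q) → ℝ,
      (u ∘ ⇑finSumFinEquiv) ∘ Sum.inl = fun i : Fin p => u (Fin.castAdd q i) := by
    intro u; funext i; simp [finSumFinEquiv_apply_left]
  have hcompR : ∀ u : Fin (p + q) → ℝ,
      (u ∘ ⇑finSumFinEquiv) ∘ Sum.inr = fun i : Fin q => u (Fin.natAdd p i) := by
    intro u; funext i; simp [finSumFinEquiv_apply_right]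
  -- key block-form characterization
  have key : ∀ w v r : Fin (p + q) → ℝ,
      F.mulVec w = G.mulVec v + r ↔
      ((fun i => Q⁻¹.mulVec w (Fin.castAdd q i)) =
          J.mulVec (fun i => Q⁻¹.mulVec v (Fin.castAdd q i)) + P₁.mulVec r ∧
        H.mulVec (fun i => Q⁻¹.mulVec w (Fin.natAdd p i)) =
          (fun i => Q⁻¹.mulVec v (Fin.natAdd p i)) + P₂.mulVec r) := by
    intro w v r
    have hFw : P.mulVec (F.mulVec w) =
        (Sum.elim (fun i => Q⁻¹.mulVec w (Fin.castAdd q i))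
          (H.mulVec (fun i => Q⁻¹.mulVec w (Fin.natAdd p i)))) ∘ finSumFinEquiv.symm := by
      have h1 : P.mulVec (F.mulVec w) = (P * F * Q).mulVec (Q⁻¹.mulVec w) := by
        rw [Matrix.mulVec_mulVec, Matrix.mulVec_mulVec, Matrix.mul_assoc (P * F), hQQ,
          Matrix.mul_one]
      rw [h1, hF, Matrix.submatrix_mulVec_equiv, Matrix.fromBlocks_mulVec]
      funext j
      simp only [Function.comp, Equiv.symm_symm]
      cases hs : finSumFinEquiv.symm j with
      | inl i =>
        simp [Matrix.one_mulVec, Matrix.zero_mulVec, finSumFinEquiv_apply_left,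
          hcompL, hcompR]
      | inr i =>
        simp [Matrix.one_mulVec, Matrix.zero_mulVec, finSumFinEquiv_apply_right,
          hcompL, hcompR]
    have hGv : P.mulVec (G.mulVec v + r) =
        (Sum.elim (J.mulVec (fun i => Q⁻¹.mulVec v (Fin.castAdd q i)) + P₁.mulVec r)
          ((fun i => Q⁻¹.mulVec v (Fin.natAdd p i)) + P₂.mulVec r)) ∘ finSumFinEquiv.symm := by
      have h1 : P.mulVec (G.mulVec v) = (P * G * Q).mulVec (Q⁻¹.mulVec v) := by
        rw [Matrix.mulVec_mulVec, Matrix.mulVec_mulVec, Matrix.mul_assoc (P * G), hQQ,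
          Matrix.mul_one]
      rw [Matrix.mulVec_add, h1, hG, Matrix.submatrix_mulVec_equiv, Matrix.fromBlocks_mulVec]
      funext j
      simp only [Function.comp, Equiv.symm_symm, Pi.add_apply]
      cases hs : finSumFinEquiv.symm j with
      | inl i =>
        have hj : j = Fin.castAdd q i := by
          have := congrArg finSumFinEquiv hs
          simpa [finSumFinEquiv_apply_left] using this
        simp [hs, hj, Matrix.one_mulVec, Matrix.zero_mulVec, finSumFinEquiv_apply_left,
          hcompL, hcompR, hP1c r i]
      | inr i =>
        have hj : j = Fin.natAdd p i := by
          have := congrArg finSumFinEquiv hs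
          simpa [finSumFinEquiv_apply_right] using this
        simp [hs, hj, Matrix.one_mulVec, Matrix.zero_mulVec, finSumFinEquiv_apply_right,
          hcompL, hcompR, hP2c r i]
    constructor
    · intro h
      have h2 : P.mulVec (F.mulVec w) = P.mulVec (G.mulVec v + r) := by rw [h]
      rw [hFw, hGv] at h2
      constructor
      · funext i
        have := congrFun h2 (Fin.castAdd q i)
        simpa [finSumFinEquiv_symm_apply_castAdd] using this
      · funext i
        have := congrFun h2 (Fin.natAdd p i)
        simpa [finSumFinEquiv_symm_apply_natAdd] using this
    · rintro ⟨h1, h2⟩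
      apply hPinj
      rw [hFw, hGv, h1, h2]
  constructor
  · rintro ⟨Y, hY0, hrec⟩
    set uq : ℕ → Fin q → ℝ := fun k i => Q⁻¹.mulVec (Y k) (Fin.natAdd p i) with huq
    have hq : ∀ k, H.mulVec (uq (k + 1)) = uq k + P₂.mulVec (V k) := by
      intro k
      exact ((key (Y (k + 1)) (Y k) (V k)).mp (hrec k)).2
    have hiter : ∀ n k, uq k = (H ^ n).mulVec (uq (k + n)) -
        ∑ i ∈ Finset.range n, (H ^ i).mulVec (P₂.mulVec (V (k + i))) := by
      intro n
      induction n with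
      | zero => intro k; simp [Matrix.one_mulVec]
      | succ n ih =>
        intro k
        have h2 : uq (k + n) = H.mulVec (uq (k + n + 1)) - P₂.mulVec (V (k + n)) := by
          rw [hq (k + n)]; abel
        rw [ih k, h2, Matrix.mulVec_sub, Matrix.mulVec_mulVec, ← pow_succ,
          Finset.sum_range_succ]
        have : k + n + 1 = k + (n + 1) := by omega
        rw [this]
        abel
    have huq0 : uq 0 = -∑ i ∈ Finset.range qs, (H ^ i).mulVec (P₂.mulVec (V i)) := by
      have := hiter qs 0
      simpa [hH, Matrix.zero_mulVec] using this
    set up0 : Fin p → ℝ := fun i => Q⁻¹.mulVec (Y 0) (Fin.castAdd q i) with hup0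
    refine ⟨up0, ?_⟩
    have hYd : Y 0 = Qp.mulVec up0 + Qq.mulVec (uq 0) := by
      have h1 : Q.mulVec (Q⁻¹.mulVec (Y 0)) = Y 0 := by
        rw [Matrix.mulVec_mulVec, hQQ, Matrix.one_mulVec]
      conv_lhs => rw [← h1, hsplit (Q⁻¹.mulVec (Y 0))]
    rw [← hY0, hYd, huq0, Matrix.mulVec_neg]
    abel
  · rintro ⟨x, hx⟩
    set S : ℕ → Fin q → ℝ :=
      fun k => ∑ i ∈ Finset.range qs, (H ^ i).mulVec (P₂.mulVec (V (k + i))) with hS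
    set zp : ℕ → Fin p → ℝ :=
      fun k => Nat.rec x (fun k zpk => J.mulVec zpk + P₁.mulVec (V k)) k with hzp
    set Y : ℕ → Fin (p + q) → ℝ :=
      fun k => Q.mulVec ((Sum.elim (zp k) (-S k)) ∘ finSumFinEquiv.symm) with hY
    have hQinvY : ∀ k, Q⁻¹.mulVec (Y k) = (Sum.elim (zp k) (-S k)) ∘ finSumFinEquiv.symm := by
      intro k
      rw [hY, Matrix.mulVec_mulVec, hQQ', Matrix.one_mulVec]
    have hcomp1 : ∀ k, (fun i => Q⁻¹.mulVec (Y k) (Fin.castAdd q i)) = zp k := by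
      intro k; funext i; rw [hQinvY k]
      simp [finSumFinEquiv_symm_apply_castAdd]
    have hcomp2 : ∀ k, (fun i => Q⁻¹.mulVec (Y k) (Fin.natAdd p i)) = -S k := by
      intro k; funext i; rw [hQinvY k]
      simp [finSumFinEquiv_symm_apply_natAdd]
    refine ⟨Y, ?_, ?_⟩
    · have hY0 : Y 0 = Qp.mulVec x + Qq.mulVec (-S 0) := by
        show Q.mulVec ((Sum.elim (zp 0) (-S 0)) ∘ finSumFinEquiv.symm) = _
        rw [hsplit ((Sum.elim (zp 0) (-S 0)) ∘ finSumFinEquiv.symm)]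
        congr 1
        · exact congrArg _ (by funext i; simp [finSumFinEquiv_symm_apply_castAdd, hzp])
        · exact congrArg _ (by funext i; simp [finSumFinEquiv_symm_apply_natAdd])
      rw [hY0]
      have hS0 : S 0 = ∑ i ∈ Finset.range qs, (H ^ i).mulVec (P₂.mulVec (V i)) := by
        rw [hS]; simp
      rw [← hx, hS0, Matrix.mulVec_neg]
      abel
    · intro k
      rw [key (Y (k + 1)) (Y k) (V k)]
      rw [hcomp1 (k + 1), hcomp1 k, hcomp2 (k + 1), hcomp2 k]
      constructor
      · rfl
      · -- H *ᵥ (-S (k+1)) = -S k + P₂ *ᵥ V k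
        have hmvs : ∀ (f : ℕ → Fin q → ℝ),
            H.mulVec (∑ i ∈ Finset.range qs, f i) = ∑ i ∈ Finset.range qs, H.mulVec (f i) := by
          intro f; exact Matrix.mulVec_sum H (Finset.range qs) f
        have hsum : H.mulVec (S (k + 1)) = S k - P₂.mulVec (V k) := by
          have hstep : H.mulVec (S (k + 1)) =
              ∑ i ∈ Finset.range qs, (H ^ (i + 1)).mulVec (P₂.mulVec (V (k + (i + 1)))) := by
            show H.mulVec (∑ i ∈ Finset.range qs,
              (H ^ i).mulVec (P₂.mulVec (V (k + 1 + i)))) = _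
            rw [hmvs]
            refine Finset.sum_congr rfl fun i _ => ?_
            rw [Matrix.mulVec_mulVec, ← pow_succ', show k + 1 + i = k + (i + 1) from by omega]
          have h1 := Finset.sum_range_succ'
            (fun i => (H ^ i).mulVec (P₂.mulVec (V (k + i)))) qs
          have h2 := Finset.sum_range_succ
            (fun i => (H ^ i).mulVec (P₂.mulVec (V (k + i)))) qs
          rw [h2, hH, Matrix.zero_mulVec, add_zero] at h1
          have h3 : ∑ i ∈ Finset.range qs, (H ^ (i + 1)).mulVec (P₂.mulVec (V (k + (i + 1)))) =
              (∑ i ∈ Finset.range qs, (H ^ i).mulVec (P₂.mulVec (V (k + i)))) -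
                (H ^ 0).mulVec (P₂.mulVec (V (k + 0))) :=
            eq_sub_iff_add_eq.mpr h1.symm
          rw [hstep, h3]
          show _ = (∑ i ∈ Finset.range qs, (H ^ i).mulVec (P₂.mulVec (V (k + i)))) - _
          simp [Matrix.one_mulVec]
        rw [Matrix.mulVec_neg, hsum]
        abel
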